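/- The stopping time τ of the two-phase test satisfies, for every n ≥ 1, P₁(τ > n) ≤ e^{−D(P^(λ₂)‖P₁)·n} ≤ e^{−γn} and P₂(τ > n) ≤ e^{−D(P^(λ₁)‖P₂)·n} ≤ e^{−γn}; in particular the two-phase test is a γ-almost-fixed-length test with τ bounded by (k+1)n. -/
import Mathlib


open Real Filter Finset MeasureTheory
open scoped Classical

variable {𝒳 : Type*} [Fintype 𝒳] [DecidableEq 𝒳] [Nonempty 𝒳]

/-- Kullback–Leibler divergence `D(Q‖P)` between pmfs on a finite alphabet. -/
noncomputable def kl (Q P : 𝒳 → ℝ) : ℝ :=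
  ∑ x, Q x * Real.log (Q x / P x)

/-- The `λ`-tilted distribution `P^(λ)` of `P₁` and `P₂`. -/
noncomputable def tilt (P₁ P₂ : 𝒳 → ℝ) (l : ℝ) : 𝒳 → ℝ :=
  fun x => P₁ x ^ (1 - l) * P₂ x ^ l / ∑ a, P₁ a ^ (1 - l) * P₂ a ^ l

/-- Probability of a set of length-`N` sample paths under i.i.d. sampling from `P`. -/
noncomputable def prodProb (P : 𝒳 → ℝ) {N : ℕ} (S : Set (Fin N → 𝒳)) : ℝ :=
  ∑ ω : Fin N → 𝒳, S.indicator (fun ω' => ∏ i, P (ω' i)) ω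

/-- The fixed-length error-exponent region `R_FD`. -/
def RFD (P₁ P₂ : 𝒳 → ℝ) : Set (ℝ × ℝ) :=
  {p | 0 ≤ p.1 ∧ 0 ≤ p.2 ∧
    ∃ l ∈ Set.Icc (0:ℝ) 1,
      p.1 ≤ kl (tilt P₁ P₂ l) P₁ ∧ p.2 ≤ kl (tilt P₁ P₂ l) P₂}

/-- `E₁(γ) = max{D(P^(λ)‖P₁) : λ ∈ [0,1], D(P^(λ)‖P₂) ≥ γ}` (sup of the empty set is 0). -/
noncomputable def E1exp (P₁ P₂ : 𝒳 → ℝ) (γ : ℝ) : ℝ :=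
  sSup {E | ∃ l ∈ Set.Icc (0:ℝ) 1, γ ≤ kl (tilt P₁ P₂ l) P₂ ∧ E = kl (tilt P₁ P₂ l) P₁}

/-- `E₂(γ) = max{D(P^(λ)‖P₂) : λ ∈ [0,1], D(P^(λ)‖P₁) ≥ γ}` (sup of the empty set is 0). -/
noncomputable def E2exp (P₁ P₂ : 𝒳 → ℝ) (γ : ℝ) : ℝ :=
  sSup {E | ∃ l ∈ Set.Icc (0:ℝ) 1, γ ≤ kl (tilt P₁ P₂ l) P₁ ∧ E = kl (tilt P₁ P₂ l) P₂}

/-- A sequential hypothesis test whose stopping time is bounded by `N`: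
a stopping time `τ` for the coordinate filtration, together with decision events
`A1`, `A2` that are determined by the samples observed up to time `τ`,
are disjoint, and exhaust the sample space. -/
structure HypTest (𝒳 : Type*) (N : ℕ) where
  τ : (Fin N → 𝒳) → ℕ
  A1 : Set (Fin N → 𝒳)
  A2 : Set (Fin N → 𝒳)
  tau_le : ∀ ω, τ ω ≤ N
  stopping : ∀ ω ω', (∀ i : Fin N, (i : ℕ) < τ ω → ω i = ω' i) → τ ω' = τ ω
  adapted1 : ∀ ω ω', (∀ i : Fin N, (i : ℕ) < τ ω → ω i = ω' i) → (ω ∈ A1 ↔ ω' ∈ A1)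
  adapted2 : ∀ ω ω', (∀ i : Fin N, (i : ℕ) < τ ω → ω i = ω' i) → (ω ∈ A2 ↔ ω' ∈ A2)
  disj : Disjoint A1 A2
  exhaust : A1 ∪ A2 = Set.univ

/-- `(E₁, E₂)` is achievable by `γ`-almost-fixed-length tests. -/
def AFLAchievable (P₁ P₂ : 𝒳 → ℝ) (γ E₁ E₂ : ℝ) : Prop :=
  0 ≤ E₁ ∧ 0 ≤ E₂ ∧
  ∃ c : ℝ, 0 < c ∧ ∃ l : ℕ, 0 < l ∧
    ∀ δ : ℝ, 0 < δ → ∃ n₀ : ℕ, ∀ n : ℕ, n₀ ≤ n →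
      ∃ N : ℕ, (N : ℝ) ≤ c * (n : ℝ) ^ l ∧
        ∃ T : HypTest 𝒳 N,
          prodProb P₁ {ω | n < T.τ ω} ≤ Real.exp (-(γ * n)) ∧
          prodProb P₂ {ω | n < T.τ ω} ≤ Real.exp (-(γ * n)) ∧
          prodProb P₁ T.A2 ≤ Real.exp (-((E₁ - δ) * n)) ∧
          prodProb P₂ T.A1 ≤ Real.exp (-((E₂ - δ) * n))

/-- `(E₁, E₂, E_Ω)` is achievable by fixed-length tests with a rejection option. -/
def RejAchievable (P₁ P₂ : 𝒳 → ℝ) (E₁ E₂ EΩ : ℝ) : Prop :=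
  0 ≤ E₁ ∧ 0 ≤ E₂ ∧ 0 ≤ EΩ ∧
  ∀ δ : ℝ, 0 < δ → ∃ n₀ : ℕ, ∀ n : ℕ, n₀ ≤ n →
    ∃ A1 A2 AΩ : Set (Fin n → 𝒳),
      Disjoint A1 A2 ∧ Disjoint A1 AΩ ∧ Disjoint A2 AΩ ∧ A1 ∪ A2 ∪ AΩ = Set.univ ∧
      prodProb P₁ A2 ≤ Real.exp (-((E₁ - δ) * n)) ∧
      prodProb P₂ A1 ≤ Real.exp (-((E₂ - δ) * n)) ∧
      prodProb P₁ AΩ + prodProb P₂ AΩ ≤ Real.exp (-((EΩ - δ) * n))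

/-- Sum of the log-likelihood ratios of the first `n` samples. -/
noncomputable def S1 (P₁ P₂ : 𝒳 → ℝ) (n : ℕ) {N : ℕ} (ω : Fin N → 𝒳) : ℝ :=
  ∑ i ∈ Finset.univ.filter (fun i : Fin N => (i : ℕ) < n),
    Real.log (P₁ (ω i) / P₂ (ω i))

/-- Sum of the log-likelihood ratios of the samples after time `n`. -/
noncomputable def S2 (P₁ P₂ : 𝒳 → ℝ) (n : ℕ) {N : ℕ} (ω : Fin N → 𝒳) : ℝ :=
  ∑ i ∈ Finset.univ.filter (fun i : Fin N => n ≤ (i : ℕ)),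
    Real.log (P₁ (ω i) / P₂ (ω i))

/-- Event that the two-phase test (phase-one thresholds `α₁ > β₁`, phase-two threshold `α`)
chooses `H₁`. -/
def twoPhaseA1 (P₁ P₂ : 𝒳 → ℝ) (k n : ℕ) (α₁ β₁ α : ℝ) : Set (Fin ((k + 1) * n) → 𝒳) :=
  {ω | α₁ ≤ S1 P₁ P₂ n ω / n ∨
    (β₁ < S1 P₁ P₂ n ω / n ∧ S1 P₁ P₂ n ω / n < α₁ ∧ α ≤ S2 P₁ P₂ n ω / (k * n))}

/-- Event that the two-phase test chooses `H₂`. -/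
def twoPhaseA2 (P₁ P₂ : 𝒳 → ℝ) (k n : ℕ) (α₁ β₁ α : ℝ) : Set (Fin ((k + 1) * n) → 𝒳) :=
  {ω | S1 P₁ P₂ n ω / n ≤ β₁ ∨
    (β₁ < S1 P₁ P₂ n ω / n ∧ S1 P₁ P₂ n ω / n < α₁ ∧ S2 P₁ P₂ n ω / (k * n) < α)}

/-- Stopping time of the two-phase test: `n` if phase one is decisive, `(k+1)n` otherwise. -/
noncomputable def twoPhaseTau (P₁ P₂ : 𝒳 → ℝ) (k n : ℕ) (α₁ β₁ : ℝ)
    (ω : Fin ((k + 1) * n) → 𝒳) : ℕ :=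
  if β₁ < S1 P₁ P₂ n ω / n ∧ S1 P₁ P₂ n ω / n < α₁ then (k + 1) * n else n

-- card of the first-n filter
lemma card_filter_lt_fin {N n : ℕ} (h : n ≤ N) :
    (Finset.univ.filter (fun i : Fin N => (i : ℕ) < n)).card = n := by
  classical
  have : (Finset.univ.filter (fun i : Fin N => (i : ℕ) < n))
      = Finset.map (Fin.castLEEmb h) Finset.univ := by
    ext i
    simp only [Finset.mem_filter, Finset.mem_univ, true_and, Finset.mem_map,
      Fin.castLEEmb_apply]
    constructor
    · intro hi; exact ⟨⟨i, hi⟩, rfl⟩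
    · rintro ⟨j, rfl⟩; simpa using j.isLt
  rw [this, Finset.card_map, Finset.card_univ, Fintype.card_fin]

-- change of measure bound
lemma change_of_measure (P Q : 𝒳 → ℝ) (hP : ∀ x, 0 < P x) (hQ : ∀ x, 0 < Q x)
    (hPs : ∑ x, P x = 1) (hQs : ∑ x, Q x = 1) {N n : ℕ} (c : ℝ) (hc : 0 ≤ c)
    (S : Set (Fin N → 𝒳))
    (hS : ∀ ω ∈ S, ∏ i ∈ Finset.univ.filter (fun i : Fin N => (i : ℕ) < n),
      (P (ω i) / Q (ω i)) ≤ c) :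
    prodProb P S ≤ c := by
  classical
  set p : Fin N → Prop := fun i => (i : ℕ) < n with hp
  set R : Fin N → 𝒳 → ℝ := fun i x => if p i then Q x else P x with hRdef
  have key : ∀ ω : Fin N → 𝒳,
      S.indicator (fun ω' => ∏ i, P (ω' i)) ω ≤ c * ∏ i, R i (ω i) := by
    intro ω
    have hsplitR : ∏ i, R i (ω i)
        = (∏ i ∈ Finset.univ.filter p, Q (ω i)) *
          ∏ i ∈ Finset.univ.filter (fun i => ¬ p i), P (ω i) := by
      rw [← Finset.prod_filter_mul_prod_filter_not Finset.univ p (fun i => R i (ω i))]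
      congr 1
      · exact Finset.prod_congr rfl (fun i hi => by
          simp [R, (Finset.mem_filter.mp hi).2])
      · exact Finset.prod_congr rfl (fun i hi => by
          simp [R, (Finset.mem_filter.mp hi).2])
    have hsplitP : ∏ i, P (ω i)
        = (∏ i ∈ Finset.univ.filter p, P (ω i)) *
          ∏ i ∈ Finset.univ.filter (fun i => ¬ p i), P (ω i) :=
      (Finset.prod_filter_mul_prod_filter_not Finset.univ p _).symm
    have hQprod : (0:ℝ) < ∏ i ∈ Finset.univ.filter p, Q (ω i) :=
      Finset.prod_pos (fun i _ => hQ _)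
    have hTail : (0:ℝ) ≤ ∏ i ∈ Finset.univ.filter (fun i => ¬ p i), P (ω i) :=
      Finset.prod_nonneg (fun i _ => (hP _).le)
    by_cases hω : ω ∈ S
    · rw [Set.indicator_of_mem hω]
      have hratio : ∏ i ∈ Finset.univ.filter p, P (ω i)
          = (∏ i ∈ Finset.univ.filter p, (P (ω i) / Q (ω i))) *
            ∏ i ∈ Finset.univ.filter p, Q (ω i) := by
        rw [Finset.prod_div_distrib, div_mul_cancel₀]
        exact ne_of_gt hQprod
      rw [hsplitP, hsplitR, hratio]
      have := hS ω hω
      calc (∏ i ∈ Finset.univ.filter p, (P (ω i) / Q (ω i))) *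
            (∏ i ∈ Finset.univ.filter p, Q (ω i)) *
            ∏ i ∈ Finset.univ.filter (fun i => ¬ p i), P (ω i)
          ≤ c * ((∏ i ∈ Finset.univ.filter p, Q (ω i)) *
            ∏ i ∈ Finset.univ.filter (fun i => ¬ p i), P (ω i)) := by
            rw [mul_assoc]
            exact mul_le_mul_of_nonneg_right this (by positivity)
      _ = c * ((∏ i ∈ Finset.univ.filter p, Q (ω i)) *
            ∏ i ∈ Finset.univ.filter (fun i => ¬ p i), P (ω i)) := rfl
    · rw [Set.indicator_of_notMem hω]
      refine mul_nonneg hc (Finset.prod_nonneg (fun i _ => ?_))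
      by_cases h : p i <;> simp [R, h, (hQ _).le, (hP _).le]
  calc prodProb P S ≤ ∑ ω : Fin N → 𝒳, c * ∏ i, R i (ω i) :=
        Finset.sum_le_sum (fun ω _ => key ω)
    _ = c * ∑ ω : Fin N → 𝒳, ∏ i, R i (ω i) := by rw [Finset.mul_sum]
    _ = c * ∏ i : Fin N, ∑ x, R i x := by rw [← Fintype.prod_sum]
    _ = c := by
        have : ∀ i : Fin N, ∑ x, R i x = 1 := by
          intro i; by_cases h : p i <;> simp [R, h, hQs, hPs]
        simp [this]

section Tilt
variable (P₁ P₂ : 𝒳 → ℝ)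

lemma Zpos (h1pos : ∀ x, 0 < P₁ x) (h2pos : ∀ x, 0 < P₂ x) (l : ℝ) :
    0 < ∑ a, P₁ a ^ (1 - l) * P₂ a ^ l :=
  Finset.sum_pos (fun a _ => mul_pos (Real.rpow_pos_of_pos (h1pos a) _)
    (Real.rpow_pos_of_pos (h2pos a) _)) ⟨Classical.arbitrary 𝒳, Finset.mem_univ _⟩

lemma tilt_pos (h1pos : ∀ x, 0 < P₁ x) (h2pos : ∀ x, 0 < P₂ x) (l : ℝ) : ∀ x, 0 < tilt P₁ P₂ l x := fun x =>
  div_pos (mul_pos (Real.rpow_pos_of_pos (h1pos x) _) (Real.rpow_pos_of_pos (h2pos x) _))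
    (Zpos P₁ P₂ h1pos h2pos _)

lemma tilt_sum (h1pos : ∀ x, 0 < P₁ x) (h2pos : ∀ x, 0 < P₂ x) (l : ℝ) : ∑ x, tilt P₁ P₂ l x = 1 := by
  unfold tilt
  rw [← Finset.sum_div, div_self (ne_of_gt (Zpos P₁ P₂ h1pos h2pos _))]

lemma log_tilt (h1pos : ∀ x, 0 < P₁ x) (h2pos : ∀ x, 0 < P₂ x) (l : ℝ) (x : 𝒳) :
    Real.log (tilt P₁ P₂ l x) = (1 - l) * Real.log (P₁ x) + l * Real.log (P₂ x)
      - Real.log (∑ a, P₁ a ^ (1 - l) * P₂ a ^ l) := by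
  unfold tilt
  rw [Real.log_div
      (ne_of_gt (mul_pos (Real.rpow_pos_of_pos (h1pos x) _) (Real.rpow_pos_of_pos (h2pos x) _)))
      (ne_of_gt (Zpos P₁ P₂ h1pos h2pos _)),
    Real.log_mul (ne_of_gt (Real.rpow_pos_of_pos (h1pos x) _))
      (ne_of_gt (Real.rpow_pos_of_pos (h2pos x) _)),
    Real.log_rpow (h1pos x), Real.log_rpow (h2pos x)]

/-- `kl (tilt l) P₁ = -l*M - log Z` and `kl (tilt l) P₂ = (1-l)*M - log Z`
where `M = ∑ Q * log(P₁/P₂)`. -/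
lemma kl_tilt (h1pos : ∀ x, 0 < P₁ x) (h2pos : ∀ x, 0 < P₂ x) (l : ℝ) :
    kl (tilt P₁ P₂ l) P₁
      = -l * (∑ x, tilt P₁ P₂ l x * (Real.log (P₁ x) - Real.log (P₂ x)))
        - Real.log (∑ a, P₁ a ^ (1 - l) * P₂ a ^ l) ∧
    kl (tilt P₁ P₂ l) P₂
      = (1 - l) * (∑ x, tilt P₁ P₂ l x * (Real.log (P₁ x) - Real.log (P₂ x)))
        - Real.log (∑ a, P₁ a ^ (1 - l) * P₂ a ^ l) := by
  have hQ := tilt_pos P₁ P₂ h1pos h2pos l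
  have hQs := tilt_sum P₁ P₂ h1pos h2pos l
  set Z := ∑ a, P₁ a ^ (1 - l) * P₂ a ^ l
  set M := ∑ x, tilt P₁ P₂ l x * (Real.log (P₁ x) - Real.log (P₂ x)) with hM
  constructor
  · unfold kl
    have : ∀ x : 𝒳, tilt P₁ P₂ l x * Real.log (tilt P₁ P₂ l x / P₁ x)
        = -l * (tilt P₁ P₂ l x * (Real.log (P₁ x) - Real.log (P₂ x)))
          - tilt P₁ P₂ l x * Real.log Z := by
      intro x
      rw [Real.log_div (ne_of_gt (hQ x)) (ne_of_gt (h1pos x)),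
        log_tilt P₁ P₂ h1pos h2pos l x]
      ring
    rw [Finset.sum_congr rfl (fun x _ => this x), Finset.sum_sub_distrib,
      ← Finset.mul_sum, ← Finset.sum_mul, hQs]
    ring
  · unfold kl
    have : ∀ x : 𝒳, tilt P₁ P₂ l x * Real.log (tilt P₁ P₂ l x / P₂ x)
        = (1 - l) * (tilt P₁ P₂ l x * (Real.log (P₁ x) - Real.log (P₂ x)))
          - tilt P₁ P₂ l x * Real.log Z := by
      intro x
      rw [Real.log_div (ne_of_gt (hQ x)) (ne_of_gt (h2pos x)),
        log_tilt P₁ P₂ h1pos h2pos l x]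
      ring
    rw [Finset.sum_congr rfl (fun x _ => this x), Finset.sum_sub_distrib,
      ← Finset.mul_sum, ← Finset.sum_mul, hQs]
    ring

lemma neg_kl_tilt₁ (h1pos : ∀ x, 0 < P₁ x) (h2pos : ∀ x, 0 < P₂ x) (l : ℝ) :
    -(kl (tilt P₁ P₂ l) P₁)
      = Real.log (∑ a, P₁ a ^ (1 - l) * P₂ a ^ l)
        + l * (kl (tilt P₁ P₂ l) P₂ - kl (tilt P₁ P₂ l) P₁) := by
  obtain ⟨h1, h2⟩ := kl_tilt P₁ P₂ h1pos h2pos l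
  rw [h1, h2]; ring

lemma neg_kl_tilt₂ (h1pos : ∀ x, 0 < P₁ x) (h2pos : ∀ x, 0 < P₂ x) (l : ℝ) :
    -(kl (tilt P₁ P₂ l) P₂)
      = Real.log (∑ a, P₁ a ^ (1 - l) * P₂ a ^ l)
        - (1 - l) * (kl (tilt P₁ P₂ l) P₂ - kl (tilt P₁ P₂ l) P₁) := by
  obtain ⟨h1, h2⟩ := kl_tilt P₁ P₂ h1pos h2pos l
  rw [h1, h2]; ring

end Tilt

/-- The stopping time of the two-phase test exceeds `n` with probability at most
`e^{−D(P^(l₂)‖P₁)n} ≤ e^{−γn}` under `H₁` (resp. `e^{−D(P^(l₁)‖P₂)n} ≤ e^{−γn}` under `H₂`),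
and is always bounded by `(k+1)n`. -/
theorem twoPhase_tau_tail (P₁ P₂ : 𝒳 → ℝ)
    (h1pos : ∀ x, 0 < P₁ x) (h2pos : ∀ x, 0 < P₂ x)
    (h1sum : ∑ x, P₁ x = 1) (h2sum : ∑ x, P₂ x = 1)
    (hne : P₁ ≠ P₂)
    (ls : ℝ) (hls : ls ∈ Set.Icc (0:ℝ) 1)
    (hchern : kl (tilt P₁ P₂ ls) P₁ = kl (tilt P₁ P₂ ls) P₂)
    (γ : ℝ) (hγ0 : 0 < γ) (hγD : γ ≤ kl (tilt P₁ P₂ ls) P₁)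
    (k : ℕ) (hk : 0 < k)
    (l₁ l₂ : ℝ)
    (hl₁ : l₁ ∈ Set.Icc (0:ℝ) 1) (hl₂ : l₂ ∈ Set.Icc (0:ℝ) 1) (hord : l₂ ≤ l₁)
    (hmin : min (kl (tilt P₁ P₂ l₁) P₂) (kl (tilt P₁ P₂ l₂) P₁) = γ) :
    ∀ n : ℕ, 1 ≤ n →
      (prodProb P₁ {ω : Fin ((k + 1) * n) → 𝒳 | n < twoPhaseTau P₁ P₂ k n
            (kl (tilt P₁ P₂ l₂) P₂ - kl (tilt P₁ P₂ l₂) P₁)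
            (kl (tilt P₁ P₂ l₁) P₂ - kl (tilt P₁ P₂ l₁) P₁) ω}
          ≤ Real.exp (-(kl (tilt P₁ P₂ l₂) P₁ * n)) ∧
        Real.exp (-(kl (tilt P₁ P₂ l₂) P₁ * n)) ≤ Real.exp (-(γ * n))) ∧
      (prodProb P₂ {ω : Fin ((k + 1) * n) → 𝒳 | n < twoPhaseTau P₁ P₂ k n
            (kl (tilt P₁ P₂ l₂) P₂ - kl (tilt P₁ P₂ l₂) P₁)
            (kl (tilt P₁ P₂ l₁) P₂ - kl (tilt P₁ P₂ l₁) P₁) ω}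
          ≤ Real.exp (-(kl (tilt P₁ P₂ l₁) P₂ * n)) ∧
        Real.exp (-(kl (tilt P₁ P₂ l₁) P₂ * n)) ≤ Real.exp (-(γ * n))) ∧
      (∀ ω : Fin ((k + 1) * n) → 𝒳,
        twoPhaseTau P₁ P₂ k n
            (kl (tilt P₁ P₂ l₂) P₂ - kl (tilt P₁ P₂ l₂) P₁)
            (kl (tilt P₁ P₂ l₁) P₂ - kl (tilt P₁ P₂ l₁) P₁) ω ≤ (k + 1) * n) := by
  intro n hn
  have hγ2 : γ ≤ kl (tilt P₁ P₂ l₂) P₁ := hmin ▸ min_le_right _ _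
  have hγ1 : γ ≤ kl (tilt P₁ P₂ l₁) P₂ := hmin ▸ min_le_left _ _
  have hnN : n ≤ (k + 1) * n := Nat.le_mul_of_pos_left n (by omega)
  have hnlt : n < (k + 1) * n := by nlinarith
  have hnpos : (0:ℝ) < (n:ℝ) := by exact_mod_cast hn
  set α₁ := kl (tilt P₁ P₂ l₂) P₂ - kl (tilt P₁ P₂ l₂) P₁ with hα₁
  set β₁ := kl (tilt P₁ P₂ l₁) P₂ - kl (tilt P₁ P₂ l₁) P₁ with hβ₁
  have hev : ∀ ω : Fin ((k + 1) * n) → 𝒳,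
      n < twoPhaseTau P₁ P₂ k n α₁ β₁ ω ↔
        (β₁ < S1 P₁ P₂ n ω / n ∧ S1 P₁ P₂ n ω / n < α₁) := by
    intro ω
    by_cases h : β₁ < S1 P₁ P₂ n ω / n ∧ S1 P₁ P₂ n ω / n < α₁ <;>
      simp [twoPhaseTau, h, hnlt]
  have hcard : (Finset.univ.filter (fun i : Fin ((k + 1) * n) => (i : ℕ) < n)).card = n :=
    card_filter_lt_fin hnN
  have hS1 : ∀ ω : Fin ((k + 1) * n) → 𝒳, S1 P₁ P₂ n ω
      = ∑ i ∈ Finset.univ.filter (fun i : Fin ((k + 1) * n) => (i : ℕ) < n),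
          (Real.log (P₁ (ω i)) - Real.log (P₂ (ω i))) := by
    intro ω
    exact Finset.sum_congr rfl (fun i _ =>
      Real.log_div (ne_of_gt (h1pos _)) (ne_of_gt (h2pos _)))
  refine ⟨⟨?_, ?_⟩, ⟨?_, ?_⟩, ?_⟩
  · -- P₁ bound via tilt l₂
    set Q := tilt P₁ P₂ l₂ with hQdef
    set Z := ∑ a, P₁ a ^ (1 - l₂) * P₂ a ^ l₂ with hZ
    apply change_of_measure P₁ Q h1pos (tilt_pos P₁ P₂ h1pos h2pos l₂) h1sum
      (tilt_sum P₁ P₂ h1pos h2pos l₂) _ (Real.exp_pos _).le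
    intro ω hω
    obtain ⟨-, hlt⟩ := (hev ω).mp hω
    have hfac : ∀ i ∈ Finset.univ.filter (fun i : Fin ((k + 1) * n) => (i : ℕ) < n),
        P₁ (ω i) / Q (ω i)
          = Real.exp (l₂ * (Real.log (P₁ (ω i)) - Real.log (P₂ (ω i))) + Real.log Z) := by
      intro i _
      have hq := tilt_pos P₁ P₂ h1pos h2pos l₂ (ω i)
      rw [← Real.exp_log (div_pos (h1pos (ω i)) hq)]
      congr 1
      rw [Real.log_div (ne_of_gt (h1pos _)) (ne_of_gt hq),
        log_tilt P₁ P₂ h1pos h2pos l₂ (ω i)]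
      ring
    rw [Finset.prod_congr rfl hfac, ← Real.exp_sum, Finset.sum_add_distrib,
      ← Finset.mul_sum, Finset.sum_const, hcard, ← hS1, nsmul_eq_mul]
    rw [Real.exp_le_exp]
    have hS1lt : S1 P₁ P₂ n ω ≤ α₁ * n := le_of_lt ((div_lt_iff₀ hnpos).mp hlt)
    have h2 : l₂ * S1 P₁ P₂ n ω ≤ l₂ * (α₁ * n) :=
      mul_le_mul_of_nonneg_left hS1lt hl₂.1
    have hid : -(kl Q P₁) = Real.log Z + l₂ * α₁ := neg_kl_tilt₁ P₁ P₂ h1pos h2pos l₂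
    nlinarith [h2, hid]
  · exact Real.exp_le_exp.mpr (neg_le_neg
      (mul_le_mul_of_nonneg_right hγ2 (Nat.cast_nonneg n)))
  · -- P₂ bound via tilt l₁
    set Q := tilt P₁ P₂ l₁ with hQdef
    set Z := ∑ a, P₁ a ^ (1 - l₁) * P₂ a ^ l₁ with hZ
    apply change_of_measure P₂ Q h2pos (tilt_pos P₁ P₂ h1pos h2pos l₁) h2sum
      (tilt_sum P₁ P₂ h1pos h2pos l₁) _ (Real.exp_pos _).le
    intro ω hω
    obtain ⟨hgt, -⟩ := (hev ω).mp hω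
    have hfac : ∀ i ∈ Finset.univ.filter (fun i : Fin ((k + 1) * n) => (i : ℕ) < n),
        P₂ (ω i) / Q (ω i)
          = Real.exp (-((1 - l₁) * (Real.log (P₁ (ω i)) - Real.log (P₂ (ω i)))) + Real.log Z) := by
      intro i _
      have hq := tilt_pos P₁ P₂ h1pos h2pos l₁ (ω i)
      rw [← Real.exp_log (div_pos (h2pos (ω i)) hq)]
      congr 1
      rw [Real.log_div (ne_of_gt (h2pos _)) (ne_of_gt hq),
        log_tilt P₁ P₂ h1pos h2pos l₁ (ω i)]
      ring
    rw [Finset.prod_congr rfl hfac, ← Real.exp_sum, Finset.sum_add_distrib,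
      Finset.sum_neg_distrib, ← Finset.mul_sum, Finset.sum_const, hcard, ← hS1, nsmul_eq_mul]
    rw [Real.exp_le_exp]
    have hS1gt : β₁ * n ≤ S1 P₁ P₂ n ω := le_of_lt ((lt_div_iff₀ hnpos).mp hgt)
    have h2 : (1 - l₁) * (β₁ * n) ≤ (1 - l₁) * S1 P₁ P₂ n ω :=
      mul_le_mul_of_nonneg_left hS1gt (by linarith [hl₁.2])
    have hid : -(kl Q P₂) = Real.log Z - (1 - l₁) * β₁ := neg_kl_tilt₂ P₁ P₂ h1pos h2pos l₁
    nlinarith [h2, hid]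
  · exact Real.exp_le_exp.mpr (neg_le_neg
      (mul_le_mul_of_nonneg_right hγ1 (Nat.cast_nonneg n)))
  · intro ω
    unfold twoPhaseTau
    split
    · exact le_refl _
    · exact hnN
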